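/- arXiv:0809.1128 — 3 statements merged into one kernel-verified Lean document; each statement's English description precedes it below -/
import Mathlib

section
/- Let $R$ be a commutative ring and $I$ a radical ideal. For any $h \in R$, $I = (I : h^\infty) \cap \sqrt{I + (h)}$, where $I : h^\infty = \{f \in R \mid \exists n, h^n f \in I\}$ and $\sqrt{I + (h)}$ is the radical of the ideal generated by $I$ and $h$. -/
/-- A radical ideal is the intersection of its saturation at `h` with the
radical of the ideal generated by `I` and `h`. -/
theorem radical_eq_saturation_inter {R : Type*} [CommRing R] (I : Ideal R)
    (hI : I.radical = I) (h : R) :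
    (I : Set R) =
      {f : R | ∃ n : ℕ, h ^ n * f ∈ I} ∩
        ((I ⊔ Ideal.span {h}).radical : Set R) := by
  ext f
  simp only [Set.mem_inter_iff, SetLike.mem_coe, Set.mem_setOf_eq]
  constructor
  · intro hf
    exact ⟨⟨0, by simpa using hf⟩,
      Ideal.radical_mono le_sup_left (Ideal.le_radical hf)⟩
  · rintro ⟨⟨n, hn⟩, hf⟩
    obtain ⟨m, hm⟩ := hf
    rw [Submodule.mem_sup] at hm
    obtain ⟨a, ha, b, hb, hab⟩ := hm
    rw [Ideal.mem_span_singleton'] at hb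
    obtain ⟨r, rfl⟩ := hb
    rw [← hI]
    refine ⟨m * n + 1, ?_⟩
    rw [← Ideal.Quotient.eq_zero_iff_mem]
    have h1 : (Ideal.Quotient.mk I) (f ^ m) = Ideal.Quotient.mk I (r * h) := by
      rw [← hab, map_add, Ideal.Quotient.eq_zero_iff_mem.mpr ha, zero_add]
    have h2 : (Ideal.Quotient.mk I) (h ^ n * f) = 0 :=
      Ideal.Quotient.eq_zero_iff_mem.mpr hn
    calc (Ideal.Quotient.mk I) (f ^ (m * n + 1))
        = ((Ideal.Quotient.mk I) (f ^ m)) ^ n * Ideal.Quotient.mk I f := by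
          rw [← map_pow, ← pow_mul, ← map_mul, ← pow_succ]
      _ = (Ideal.Quotient.mk I r) ^ n *
            ((Ideal.Quotient.mk I) (h ^ n * f)) := by
          rw [h1]; push_cast [map_mul, map_pow]; ring
      _ = 0 := by rw [h2, mul_zero]
end

section
/- Let $R$ be a commutative ring, $I$ a radical ideal of $R$, and let $J$ be an ideal and $h \in R$ be such that $J \subseteq I \subseteq J : h^\infty$. Suppose $J$ is generated by elements $C_1, \ldots, C_l$ all lying in $I$. Then $I = (J : h^\infty) \cap (I : C_1) \cap \cdots \cap (I : C_l) \cap \sqrt{I + (h)}$. -/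
/-- Proposition 2 (algebraic form): decomposition of a radical ideal via a
sandwiched ideal `J` and its saturation. -/
theorem radical_decomposition_sandwich {R : Type*} [CommRing R] (I : Ideal R)
    (hI : I.radical = I) {l : ℕ} (C : Fin l → R) (hC : ∀ i, C i ∈ I)
    (J : Ideal R) (hJ : J = Ideal.span (Set.range C)) (h : R)
    (hIJ : ∀ f ∈ I, ∃ n : ℕ, h ^ n * f ∈ J) :
    ∀ f : R, f ∈ I ↔
      ((∃ n : ℕ, h ^ n * f ∈ J) ∧ (∀ i, C i * f ∈ I) ∧
        f ∈ (I ⊔ Ideal.span {h}).radical) := by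
  intro f
  constructor
  · intro hf
    exact ⟨hIJ f hf, fun i => I.mul_mem_left _ hf,
      Ideal.le_radical (Ideal.mem_sup_left hf)⟩
  · rintro ⟨⟨n, hn⟩, hCf, hrad⟩
    -- h^n * f^2 ∈ I
    have hsq : h ^ n * f ^ 2 ∈ I := by
      rw [hJ] at hn
      obtain ⟨c, hc⟩ := (Submodule.mem_span_range_iff_exists_fun R).mp hn
      have : h ^ n * f ^ 2 = f * (h ^ n * f) := by ring
      rw [this, ← hc, Finset.mul_sum]
      refine Ideal.sum_mem _ fun i _ => ?_
      have hmem : c i * (C i * f) ∈ I := I.mul_mem_left _ (hCf i)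
      have heq : f * (c i • C i) = c i * (C i * f) := by
        simp [smul_eq_mul]; ring
      rw [heq]; exact hmem
    obtain ⟨m, hm⟩ := hrad
    obtain ⟨a, haI, b, hb, hab⟩ := Submodule.mem_sup.mp hm
    obtain ⟨r, hr⟩ := Ideal.mem_span_singleton'.mp hb
    rw [← hI]
    refine ⟨m * n + 2, ?_⟩
    set Q := Ideal.Quotient.mk I with hQ
    have h1 : Q (f ^ m) = Q (r * h) := by
      rw [← hab, ← hr, map_add, Ideal.Quotient.eq_zero_iff_mem.mpr haI, zero_add]
    have h2 : Q (h ^ n * f ^ 2) = 0 := Ideal.Quotient.eq_zero_iff_mem.mpr hsq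
    have key : Q (f ^ (m * n + 2)) = 0 := by
      calc Q (f ^ (m * n + 2)) = (Q (f ^ m)) ^ n * (Q f) ^ 2 := by
            simp only [map_pow]; ring
        _ = (Q (r * h)) ^ n * (Q f) ^ 2 := by rw [h1]
        _ = (Q r) ^ n * Q (h ^ n * f ^ 2) := by
            simp only [map_mul, map_pow]; ring
        _ = 0 := by rw [h2, mul_zero]
    exact Ideal.Quotient.eq_zero_iff_mem.mp key
end

section
/- Let $R$ be a commutative ring, $I$ a radical ideal, $C_1, \ldots, C_l \in I$ generating an ideal $J$, and $h \in R$. If $f \in (J : h^\infty) \cap (I : C_1) \cap \cdots \cap (I : C_l)$, then $f \in I : h^\infty$. -/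
/-- Key step of Proposition 2: membership in `J : h^∞` together with
`C i * f ∈ I` for all generators forces membership in `I : h^∞`. -/
theorem mem_saturation_of_colon {R : Type*} [CommRing R] (I : Ideal R)
    (hI : I.radical = I) {l : ℕ} (C : Fin l → R) (hC : ∀ i, C i ∈ I)
    (J : Ideal R) (hJ : J = Ideal.span (Set.range C)) (h : R) (f : R)
    (h1 : ∃ n : ℕ, h ^ n * f ∈ J) (h2 : ∀ i, C i * f ∈ I) :
    ∃ n : ℕ, h ^ n * f ∈ I := by
  obtain ⟨n, hn⟩ := h1
  rw [hJ, Ideal.span, Submodule.mem_span_range_iff_exists_fun] at hn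
  obtain ⟨c, hc⟩ := hn
  refine ⟨n, ?_⟩
  rw [← hI, Ideal.mem_radical_iff]
  refine ⟨2, ?_⟩
  have hsq : (h ^ n * f) * (h ^ n * f) = h ^ n * ((h ^ n * f) * f) := by ring
  rw [pow_two, hsq]
  apply Ideal.mul_mem_left
  rw [← hc, Finset.sum_mul]
  apply Ideal.sum_mem
  intro i _
  rw [smul_eq_mul, mul_assoc]
  exact Ideal.mul_mem_left _ _ (h2 i)
end
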